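/- Assume T_{2n} = T⁰ for all n with T⁰ > T*, and T_{2n+1} = T̃ for all n. Set c := M e^{−μ T⁰}, and suppose there is d < 1 such that e^{2 D_{2n+1} T̃} c ≤ d for every n ∈ ℕ. Then there exist constants C > 0 and α > 0, depending only on M, μ, T⁰, T̃ and d, such that every trajectory U of the on–off anti-damped system with initial datum U₀ satisfies ‖U(t)‖ ≤ C e^{−α t} ‖U₀‖ for all t ≥ 0. -/

import Mathlib

open Set Real

lemma gronwall_aux {H : Type*} [NormedAddCommGroup H] [InnerProductSpace ℝ H]
    {U V : ℝ → H} {Dop : H →L[ℝ] H} {a b : ℝ}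
    (hUc : ContinuousOn U (Set.Icc a b))
    (hderiv : ∀ s ∈ Set.Ioo a b, HasDerivAt U (V s + Dop (U s)) s)
    (hVU : ∀ s ∈ Set.Ioo a b, (inner ℝ (U s) (V s) : ℝ) ≤ 0) :
    ∀ s ∈ Set.Icc a b, ‖U s‖ ≤ Real.exp (‖Dop‖ * (s - a)) * ‖U a‖ := by
  set K := ‖Dop‖ with hK
  have hK0 : 0 ≤ K := norm_nonneg _
  set g : ℝ → ℝ := fun s => Real.exp (-(2*K)*s) * (inner ℝ (U s) (U s) : ℝ) with hg
  have hgderiv : ∀ x ∈ Set.Ioo a b, HasDerivAt g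
      (Real.exp (-(2*K)*x) * (-(2*K)) * (inner ℝ (U x) (U x) : ℝ)
        + Real.exp (-(2*K)*x) * ((inner ℝ (U x) (V x + Dop (U x)) : ℝ)
            + (inner ℝ (V x + Dop (U x)) (U x) : ℝ))) x := by
    intro x hx
    have h1 : HasDerivAt (fun s : ℝ => Real.exp (-(2*K)*s)) (Real.exp (-(2*K)*x) * (-(2*K))) x := by
      simpa using (((hasDerivAt_id x).const_mul (-(2*K))).exp)
    have h2 : HasDerivAt (fun s => (inner ℝ (U s) (U s) : ℝ))
        ((inner ℝ (U x) (V x + Dop (U x)) : ℝ) + (inner ℝ (V x + Dop (U x)) (U x) : ℝ)) x :=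
      (hderiv x hx).inner ℝ (hderiv x hx)
    exact h1.mul h2
  have hanti : AntitoneOn g (Set.Icc a b) := by
    apply antitoneOn_of_deriv_nonpos (convex_Icc a b)
    · exact ((Real.continuous_exp.comp (continuous_const.mul continuous_id)).continuousOn).mul
        (hUc.inner hUc)
    · rw [interior_Icc]
      exact fun x hx => ((hgderiv x hx).differentiableAt).differentiableWithinAt
    · rw [interior_Icc]
      intro x hx
      rw [(hgderiv x hx).deriv]
      have he : (0:ℝ) < Real.exp (-(2*K)*x) := Real.exp_pos _
      have hI : (0:ℝ) ≤ (inner ℝ (U x) (U x) : ℝ) := real_inner_self_nonneg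
      have hUV : (inner ℝ (U x) (V x) : ℝ) ≤ 0 := hVU x hx
      have hVUc : (inner ℝ (V x) (U x) : ℝ) ≤ 0 := by rwa [real_inner_comm]
      have hDU : (inner ℝ (Dop (U x)) (U x) : ℝ) ≤ K * (inner ℝ (U x) (U x) : ℝ) := by
        calc (inner ℝ (Dop (U x)) (U x) : ℝ) ≤ ‖Dop (U x)‖ * ‖U x‖ := real_inner_le_norm _ _
          _ ≤ (K * ‖U x‖) * ‖U x‖ :=
            mul_le_mul_of_nonneg_right (Dop.le_opNorm _) (norm_nonneg _)
          _ = K * (inner ℝ (U x) (U x) : ℝ) := by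
            rw [real_inner_self_eq_norm_mul_norm]; ring
      have hUD : (inner ℝ (U x) (Dop (U x)) : ℝ) ≤ K * (inner ℝ (U x) (U x) : ℝ) := by
        rwa [real_inner_comm]
      rw [inner_add_right, inner_add_left]
      nlinarith [he.le]
  intro s hs
  have h : g s ≤ g a := hanti (Set.left_mem_Icc.mpr (hs.1.trans hs.2)) hs hs.1
  have key : ‖U s‖ * ‖U s‖ ≤ (Real.exp (K*(s-a)) * ‖U a‖) * (Real.exp (K*(s-a)) * ‖U a‖) := by
    have hes : 0 < Real.exp (-(2*K)*s) := Real.exp_pos _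
    have hexp : Real.exp (-(2*K)*a)
        = Real.exp (-(2*K)*s) * (Real.exp (K*(s-a)) * Real.exp (K*(s-a))) := by
      rw [← Real.exp_add, ← Real.exp_add]; ring_nf
    simp only [hg] at h
    rw [real_inner_self_eq_norm_mul_norm, real_inner_self_eq_norm_mul_norm, hexp] at h
    nlinarith [h, hes]
  nlinarith [key, norm_nonneg (U s), norm_nonneg (U a),
    mul_nonneg (Real.exp_pos (K*(s-a))).le (norm_nonneg (U a))]

theorem stmt_11
    {H : Type*} [NormedAddCommGroup H] [InnerProductSpace ℝ H]
    (S : ℝ → H →L[ℝ] H) (M μ : ℝ)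
    (hM : 1 ≤ M) (hμ : 0 < μ)
    (hS0 : S 0 = ContinuousLinearMap.id ℝ H)
    (hSadd : ∀ s u : ℝ, 0 ≤ s → 0 ≤ u → S (s + u) = (S s).comp (S u))
    (hScont : ∀ x : H, ContinuousOn (fun s => S s x) (Set.Ici (0:ℝ)))
    (hSbound : ∀ s : ℝ, 0 ≤ s → ‖S s‖ ≤ M * Real.exp (-μ * s))
    (hScontr : ∀ s : ℝ, 0 ≤ s → ∀ x : H, ‖S s x‖ ≤ ‖x‖)
    (t : ℕ → ℝ) (ht0 : t 0 = 0) (htmono : StrictMono t)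
    (htlim : Filter.Tendsto t Filter.atTop Filter.atTop)
    (D : ℕ → H →L[ℝ] H)
    (hDpos : ∀ (n : ℕ) (x : H), (0:ℝ) ≤ inner ℝ (D n x) x)
    (T0 Ttil : ℝ)
    (hT0 : ∀ n : ℕ, t (2*n+1) - t (2*n) = T0)
    (hT0star : Real.log M / μ < T0)
    (hTt : ∀ n : ℕ, t (2*n+2) - t (2*n+1) = Ttil)
    (d : ℝ) (hd : d < 1)
    (hsup : ∀ n : ℕ, Real.exp (2*‖D n‖*Ttil) * (M * Real.exp (-μ*T0)) ≤ d)
    :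
    ∃ C > (0:ℝ), ∃ α > (0:ℝ), ∀ (U : ℝ → H) (U₀ : H) (V : ℝ → H),
      ContinuousOn U (Set.Ici (0:ℝ)) → U 0 = U₀ →
      (∀ n : ℕ, ∀ s ∈ Set.Icc (t (2*n)) (t (2*n+1)),
        U s = S (s - t (2*n)) (U (t (2*n)))) →
      (∀ n : ℕ, ∀ s ∈ Set.Ioo (t (2*n+1)) (t (2*n+2)),
        HasDerivAt U (V s + D n (U s)) s) →
      (∀ n : ℕ, ∀ s ∈ Set.Ioo (t (2*n+1)) (t (2*n+2)),
        (inner ℝ (U s) (V s) : ℝ) ≤ 0) →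
      ∀ r : ℝ, 0 ≤ r → ‖U r‖ ≤ C * Real.exp (-α * r) * ‖U₀‖ := by
  have hM0 : (0:ℝ) < M := lt_of_lt_of_le one_pos hM
  have hT0pos : 0 < T0 := by
    have h1 := hT0 0
    have h2 : t 0 < t 1 := htmono one_pos
    simp only [Nat.mul_zero, Nat.zero_add] at h1
    linarith
  have hTtpos : 0 < Ttil := by
    have h1 := hTt 0
    have h2 : t 1 < t 2 := htmono one_lt_two
    simp only [Nat.mul_zero, Nat.zero_add] at h1
    linarith
  have hd0 : 0 < d := lt_of_lt_of_le (by positivity) (hsup 0)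
  set P : ℝ := T0 + Ttil with hPdef
  have hP : 0 < P := by positivity
  have tnonneg : ∀ n, 0 ≤ t n := fun n => ht0 ▸ htmono.monotone (Nat.zero_le n)
  have t2n : ∀ n : ℕ, t (2*n) = n * P := by
    intro n
    induction n with
    | zero => simpa using ht0
    | succ k ih =>
      have h1 := hT0 k
      have h2 := hTt k
      have : 2*(k+1) = 2*k+2 := by ring
      rw [this]
      push_cast
      linarith
  have hlogd : Real.log d < 0 := Real.log_neg hd0 hd
  refine ⟨1/d, by positivity, -(Real.log d)/P, div_pos (neg_pos.mpr hlogd) hP, ?_⟩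
  intro U U₀ V hUc hU0 heven hodd hdis r hr
  -- Gronwall on odd intervals
  have gron : ∀ n : ℕ, ∀ s ∈ Set.Icc (t (2*n+1)) (t (2*n+2)),
      ‖U s‖ ≤ Real.exp (‖D n‖ * (s - t (2*n+1))) * ‖U (t (2*n+1))‖ := by
    intro n
    exact gronwall_aux (hUc.mono (fun x hx => le_trans (tnonneg _) hx.1))
      (hodd n) (hdis n)
  -- contraction on even intervals
  have evenb : ∀ n : ℕ, ∀ s ∈ Set.Icc (t (2*n)) (t (2*n+1)), ‖U s‖ ≤ ‖U (t (2*n))‖ := by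
    intro n s hs
    rw [heven n s hs]
    exact hScontr _ (by linarith [hs.1]) _
  have hab : ∀ n : ℕ, t (2*n) ≤ t (2*n+1) := fun n => (htmono (by omega)).le
  have hbc : ∀ n : ℕ, t (2*n+1) ≤ t (2*n+2) := fun n => (htmono (by omega)).le
  -- decay factor over even interval
  have cbound : ∀ n : ℕ, ‖U (t (2*n+1))‖ ≤ (M * Real.exp (-μ*T0)) * ‖U (t (2*n))‖ := by
    intro n
    have hmem : t (2*n+1) ∈ Set.Icc (t (2*n)) (t (2*n+1)) := ⟨hab n, le_refl _⟩
    rw [heven n _ hmem, hT0 n]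
    calc ‖S T0 (U (t (2*n)))‖ ≤ ‖S T0‖ * ‖U (t (2*n))‖ := (S T0).le_opNorm _
      _ ≤ (M * Real.exp (-μ*T0)) * ‖U (t (2*n))‖ :=
        mul_le_mul_of_nonneg_right (hSbound T0 hT0pos.le) (norm_nonneg _)
  have hEd : ∀ n : ℕ, Real.exp (‖D n‖ * Ttil) * (M * Real.exp (-μ*T0)) ≤ d := by
    intro n
    refine le_trans ?_ (hsup n)
    have : ‖D n‖ * Ttil ≤ 2*‖D n‖*Ttil := by nlinarith [norm_nonneg (D n)]
    exact mul_le_mul_of_nonneg_right (Real.exp_le_exp.mpr this) (by positivity)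
  have step : ∀ n : ℕ, ‖U (t (2*n+2))‖ ≤ d * ‖U (t (2*n))‖ := by
    intro n
    have h1 : ‖U (t (2*n+2))‖ ≤ Real.exp (‖D n‖ * Ttil) * ‖U (t (2*n+1))‖ := by
      have := gron n (t (2*n+2)) ⟨hbc n, le_refl _⟩
      rwa [hTt n] at this
    calc ‖U (t (2*n+2))‖ ≤ Real.exp (‖D n‖ * Ttil) * ‖U (t (2*n+1))‖ := h1
      _ ≤ Real.exp (‖D n‖ * Ttil) * ((M * Real.exp (-μ*T0)) * ‖U (t (2*n))‖) :=
        mul_le_mul_of_nonneg_left (cbound n) (Real.exp_pos _).le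
      _ = (Real.exp (‖D n‖ * Ttil) * (M * Real.exp (-μ*T0))) * ‖U (t (2*n))‖ := by ring
      _ ≤ d * ‖U (t (2*n))‖ := mul_le_mul_of_nonneg_right (hEd n) (norm_nonneg _)
  have decay : ∀ n : ℕ, ‖U (t (2*n))‖ ≤ d^n * ‖U₀‖ := by
    intro n
    induction n with
    | zero => simp [ht0, hU0]
    | succ k ih =>
      have h2 : 2*(k+1) = 2*k+2 := by ring
      rw [h2]
      calc ‖U (t (2*k+2))‖ ≤ d * ‖U (t (2*k))‖ := step k
        _ ≤ d * (d^k * ‖U₀‖) := mul_le_mul_of_nonneg_left ih hd0.le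
        _ = d^(k+1) * ‖U₀‖ := by ring
  have inper : ∀ n : ℕ, ∀ s ∈ Set.Icc (t (2*n)) (t (2*n+2)), ‖U s‖ ≤ ‖U (t (2*n))‖ := by
    intro n s hs
    by_cases hcase : s ≤ t (2*n+1)
    · exact evenb n s ⟨hs.1, hcase⟩
    · push_neg at hcase
      have h1 : ‖U s‖ ≤ Real.exp (‖D n‖ * (s - t (2*n+1))) * ‖U (t (2*n+1))‖ :=
        gron n s ⟨hcase.le, hs.2⟩
      have h2 : Real.exp (‖D n‖ * (s - t (2*n+1))) ≤ Real.exp (‖D n‖ * Ttil) := by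
        apply Real.exp_le_exp.mpr
        have hst : s - t (2*n+1) ≤ Ttil := by
          have := hTt n; linarith [hs.2]
        nlinarith [norm_nonneg (D n)]
      calc ‖U s‖ ≤ Real.exp (‖D n‖ * (s - t (2*n+1))) * ‖U (t (2*n+1))‖ := h1
        _ ≤ Real.exp (‖D n‖ * Ttil) * ‖U (t (2*n+1))‖ :=
          mul_le_mul_of_nonneg_right h2 (norm_nonneg _)
        _ ≤ Real.exp (‖D n‖ * Ttil) * ((M * Real.exp (-μ*T0)) * ‖U (t (2*n))‖) :=
          mul_le_mul_of_nonneg_left (cbound n) (Real.exp_pos _).le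
        _ = (Real.exp (‖D n‖ * Ttil) * (M * Real.exp (-μ*T0))) * ‖U (t (2*n))‖ := by ring
        _ ≤ d * ‖U (t (2*n))‖ := mul_le_mul_of_nonneg_right (hEd n) (norm_nonneg _)
        _ ≤ 1 * ‖U (t (2*n))‖ := mul_le_mul_of_nonneg_right hd.le (norm_nonneg _)
        _ = ‖U (t (2*n))‖ := one_mul _
  -- locate r
  set n : ℕ := Nat.floor (r / P) with hn
  have hn1 : (n:ℝ) * P ≤ r := by
    have := Nat.floor_le (show (0:ℝ) ≤ r / P by positivity)
    calc (n:ℝ) * P ≤ (r/P) * P := mul_le_mul_of_nonneg_right this hP.le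
      _ = r := by field_simp
  have hn2 : r < ((n:ℝ)+1) * P := by
    have := Nat.lt_floor_add_one (r / P)
    calc r = (r/P) * P := by field_simp
      _ < ((n:ℝ)+1) * P := mul_lt_mul_of_pos_right this hP
  have hmem : r ∈ Set.Icc (t (2*n)) (t (2*n+2)) := by
    constructor
    · rw [t2n n]; exact hn1
    · have : t (2*n+2) = ((n:ℝ)+1) * P := by
        have h2 : 2*(n+1) = 2*n+2 := by ring
        have := t2n (n+1)
        rw [h2] at this
        rw [this]; push_cast; ring
      rw [this]; exact hn2.le
  have hUr : ‖U r‖ ≤ d^n * ‖U₀‖ := le_trans (inper n r hmem) (decay n)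
  have hdn : d^n ≤ (1/d) * Real.exp (-(-(Real.log d)/P) * r) := by
    have h1 : d^n = Real.exp ((n:ℝ) * Real.log d) := by
      rw [Real.exp_nat_mul, Real.exp_log hd0]
    have h2 : (n:ℝ) * Real.log d ≤ (r/P - 1) * Real.log d := by
      have : r/P - 1 < (n:ℝ) := by
        have := Nat.lt_floor_add_one (r / P)
        linarith
      nlinarith
    have h3 : (1/d) * Real.exp (-(-(Real.log d)/P) * r)
        = Real.exp ((r/P - 1) * Real.log d) := by
      have he : (r/P - 1) * Real.log d = (-(-(Real.log d)/P) * r) + (- Real.log d) := by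
        field_simp; ring
      rw [he, Real.exp_add, Real.exp_neg, Real.exp_log hd0]
      ring
    rw [h1, h3]
    exact Real.exp_le_exp.mpr h2
  calc ‖U r‖ ≤ d^n * ‖U₀‖ := hUr
    _ ≤ ((1/d) * Real.exp (-(-(Real.log d)/P) * r)) * ‖U₀‖ :=
      mul_le_mul_of_nonneg_right hdn (norm_nonneg _)
    _ = 1/d * Real.exp (-(-(Real.log d)/P) * r) * ‖U₀‖ := by ring
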